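/- In the irreducible case with |G| > d, for any m ∈ [0,1], the bound f(m) = d/|G| (if m ≥ 1 − d/|G|) or m/(|G|/d − 1) (if m < 1 − d/|G|) is attained: for any unit vector φ, the choice ρ = |φ⟩⟨φ| and E₁ = f(m)|φ⟩⟨φ| satisfies E₁ ≥ 0, Σ_g U_g E₁ U_g† ≤ 1, Σ_{g≠1} tr(E₁ U_g ρ U_g†) ≤ m, and tr(E₁ ρ) = f(m). -/

import Mathlib

open Matrix BigOperators ComplexOrder

private lemma psd_real_smul {n : Type*} [Fintype n] {A : Matrix n n ℂ} (hA : A.PosSemidef)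
    {c : ℝ} (hc : 0 ≤ c) : ((c : ℂ) • A).PosSemidef := by
  refine ⟨?_, fun x => ?_⟩
  · have h1 : ((c : ℂ) • A)ᴴ = star (c : ℂ) • Aᴴ := Matrix.conjTranspose_smul _ _
    rw [Matrix.IsHermitian, h1, hA.1.eq, Complex.star_def, Complex.conj_ofReal]
  · exact (hA.smul (Complex.zero_le_real.mpr hc)).2 x

/-- Attainability of the bound in the irreducible case with `|G| > d`: for any error margin
`m ∈ [0,1]` and any unit vector `φ`, taking `ρ = |φ⟩⟨φ|` and `E₁ = f(m)|φ⟩⟨φ|`, where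
`f(m) = d/|G|` if `m ≥ 1 − d/|G|` and `f(m) = m/(|G|/d − 1)` otherwise, yields a valid
covariant POVM element meeting the error margin and achieving success probability `f(m)`. -/
theorem success_probability_bound_attained_irreducible {G : Type*} [Group G] [Fintype G]
    [DecidableEq G] {d : ℕ} (hd : 0 < d) (hGd : d < Fintype.card G)
    (U : G →* Matrix.unitaryGroup (Fin d) ℂ)
    (hirr : ∀ A : Matrix (Fin d) (Fin d) ℂ,
      (∀ g, (U g : Matrix (Fin d) (Fin d) ℂ) * A = A * (U g : Matrix (Fin d) (Fin d) ℂ)) →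
      ∃ z : ℂ, A = z • (1 : Matrix (Fin d) (Fin d) ℂ))
    (m : ℝ) (hm0 : 0 ≤ m) (hm1 : m ≤ 1)
    (φ : Fin d → ℂ) (hφ : ∑ a, ‖φ a‖ ^ 2 = 1) :
    let f : ℝ := if 1 - (d : ℝ) / (Fintype.card G : ℝ) ≤ m then
        (d : ℝ) / (Fintype.card G : ℝ)
      else m / ((Fintype.card G : ℝ) / (d : ℝ) - 1)
    let ρ : Matrix (Fin d) (Fin d) ℂ := Matrix.vecMulVec φ (star φ)
    let E₁ : Matrix (Fin d) (Fin d) ℂ := (f : ℂ) • ρ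
    E₁.PosSemidef ∧
      ((1 : Matrix (Fin d) (Fin d) ℂ) -
        ∑ g : G, (U g : Matrix (Fin d) (Fin d) ℂ) * E₁ *
          ((U g : Matrix (Fin d) (Fin d) ℂ))ᴴ).PosSemidef ∧
      (∑ g ∈ ({1}ᶜ : Finset G),
        (E₁ * ((U g : Matrix (Fin d) (Fin d) ℂ) * ρ *
          ((U g : Matrix (Fin d) (Fin d) ℂ))ᴴ)).trace).re ≤ m ∧
      ((E₁ * ρ).trace).re = f := by
  intro f ρ E₁
  have hdR : (0:ℝ) < d := by exact_mod_cast hd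
  have hGR : (0:ℝ) < Fintype.card G := by
    exact_mod_cast Fintype.card_pos
  have hdG : (d:ℝ) < Fintype.card G := by exact_mod_cast hGd
  have hrat : (0:ℝ) < (Fintype.card G : ℝ)/(d:ℝ) - 1 := by
    rw [sub_pos, lt_div_iff₀ hdR, one_mul]; exact hdG
  have hkey : 1 - (d:ℝ)/(Fintype.card G : ℝ) =
      ((d:ℝ)/(Fintype.card G : ℝ)) * ((Fintype.card G : ℝ)/(d:ℝ) - 1) := by
    field_simp
  -- properties of f
  have hf0 : 0 ≤ f := by
    simp only [f]; split
    · positivity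
    · positivity
  have hfle : f ≤ (d:ℝ)/(Fintype.card G : ℝ) := by
    simp only [f]; split
    · exact le_rfl
    · rename_i hc
      push_neg at hc
      rw [div_le_iff₀ hrat, ← hkey]
      exact le_of_lt hc
  have hfm : f * ((Fintype.card G : ℝ)/(d:ℝ) - 1) ≤ m := by
    simp only [f]; split
    · rename_i hc
      rw [← hkey]; exact hc
    · rw [div_mul_cancel₀ _ (ne_of_gt hrat)]
  -- vector facts
  have hnorm : star φ ⬝ᵥ φ = 1 := by
    have : ∀ a, star (φ a) * φ a = ((‖φ a‖ ^ 2 : ℝ) : ℂ) := fun a => by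
      rw [RCLike.star_def, RCLike.conj_mul]
      push_cast
      norm_cast
    simp only [dotProduct, Pi.star_apply, this]
    rw [← Complex.ofReal_sum, hφ, Complex.ofReal_one]
  have hρ2 : ρ * ρ = ρ := by
    ext i j
    simp only [ρ, Matrix.mul_apply, Matrix.vecMulVec_apply, Pi.star_apply]
    calc ∑ k, φ i * star (φ k) * (φ k * star (φ j))
        = (φ i * star (φ j)) * (star φ ⬝ᵥ φ) := by
          rw [dotProduct, Finset.mul_sum]
          exact Finset.sum_congr rfl fun k _ => by simp only [Pi.star_apply]; ring
      _ = φ i * star (φ j) := by rw [hnorm, mul_one]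
  have htrρ : ρ.trace = 1 := by
    rw [← hnorm]
    simp only [Matrix.trace, Matrix.diag, ρ, Matrix.vecMulVec_apply, dotProduct, Pi.star_apply]
    exact Finset.sum_congr rfl fun k _ => by ring
  have hρpsd : ρ.PosSemidef := by
    have hρ : ρ = (Matrix.replicateRow (Fin 1) (star φ))ᴴ * Matrix.replicateRow (Fin 1) (star φ) := by
      rw [Matrix.conjTranspose_replicateRow, star_star]
      exact Matrix.vecMulVec_eq (Fin 1) φ (star φ)
    rw [hρ]
    exact Matrix.posSemidef_conjTranspose_mul_self _
  -- unitarity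
  have hUst : ∀ g : G, ((U g : Matrix (Fin d) (Fin d) ℂ))ᴴ * (U g : Matrix (Fin d) (Fin d) ℂ)
      = 1 := fun g => by
    rw [← Matrix.star_eq_conjTranspose]
    exact UnitaryGroup.star_mul_self (U g)
  -- Schur average
  set S : Matrix (Fin d) (Fin d) ℂ :=
    ∑ g : G, (U g : Matrix (Fin d) (Fin d) ℂ) * ρ * ((U g : Matrix (Fin d) (Fin d) ℂ))ᴴ
    with hSdef
  have hcomm : ∀ h : G, (U h : Matrix (Fin d) (Fin d) ℂ) * S
      = S * (U h : Matrix (Fin d) (Fin d) ℂ) := by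
    intro h
    rw [hSdef, Finset.mul_sum, Finset.sum_mul,
      ← Equiv.sum_comp (Equiv.mulLeft h) (fun g => ((U g : Matrix (Fin d) (Fin d) ℂ) * ρ *
        ((U g : Matrix (Fin d) (Fin d) ℂ))ᴴ) * (U h : Matrix (Fin d) (Fin d) ℂ))]
    refine Finset.sum_congr rfl fun g _ => ?_
    have hmul : (U (h * g) : Matrix (Fin d) (Fin d) ℂ)
        = (U h : Matrix (Fin d) (Fin d) ℂ) * (U g : Matrix (Fin d) (Fin d) ℂ) := by
      rw [_root_.map_mul]; rfl
    simp only [Equiv.coe_mulLeft, hmul, Matrix.conjTranspose_mul]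
    simp only [Matrix.mul_assoc]
    rw [hUst h, Matrix.mul_one]
  obtain ⟨z, hz⟩ := hirr S hcomm
  have hdC : (d:ℂ) ≠ 0 := Nat.cast_ne_zero.mpr hd.ne'
  have htrS : S.trace = (Fintype.card G : ℂ) := by
    rw [hSdef, Matrix.trace_sum]
    have ht : ∀ g : G, ((U g : Matrix (Fin d) (Fin d) ℂ) * ρ *
        ((U g : Matrix (Fin d) (Fin d) ℂ))ᴴ).trace = 1 := fun g => by
      rw [Matrix.trace_mul_cycle, hUst g, Matrix.one_mul, htrρ]
    simp [ht]
  have hzval : z = (Fintype.card G : ℂ) / (d:ℂ) := by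
    have h1 : S.trace = z * (d:ℂ) := by
      rw [hz, Matrix.trace_smul, Matrix.trace_one, smul_eq_mul]
      simp
    rw [htrS] at h1
    rw [eq_div_iff hdC]
    exact h1.symm
  -- now the four goals
  refine ⟨psd_real_smul hρpsd hf0, ?_, ?_, ?_⟩
  · -- second goal
    have hsum : ∑ g : G, (U g : Matrix (Fin d) (Fin d) ℂ) * E₁ *
        ((U g : Matrix (Fin d) (Fin d) ℂ))ᴴ = (f:ℂ) • S := by
      rw [hSdef, Finset.smul_sum]
      refine Finset.sum_congr rfl fun g _ => ?_
      simp only [E₁, Matrix.mul_smul, Matrix.smul_mul]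
    have hrw : (1 : Matrix (Fin d) (Fin d) ℂ) - ∑ g : G,
        (U g : Matrix (Fin d) (Fin d) ℂ) * E₁ * ((U g : Matrix (Fin d) (Fin d) ℂ))ᴴ
        = (((1 - f * ((Fintype.card G : ℝ)/(d:ℝ)) : ℝ)) : ℂ) • (1 : Matrix (Fin d) (Fin d) ℂ) := by
      rw [hsum, hz, hzval, smul_smul]
      have : ((((1 - f * ((Fintype.card G : ℝ)/(d:ℝ)) : ℝ)) : ℂ))
          = 1 - (f:ℂ) * ((Fintype.card G : ℂ) / (d:ℂ)) := by push_cast; ring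
      rw [this, sub_smul, one_smul]
    rw [hrw]
    refine psd_real_smul Matrix.PosSemidef.one ?_
    have h2 : ((d:ℝ)/(Fintype.card G : ℝ)) * ((Fintype.card G : ℝ)/(d:ℝ)) = 1 := by
      field_simp
    have h3 : f * ((Fintype.card G : ℝ)/(d:ℝ)) ≤ 1 := by
      have := mul_le_mul_of_nonneg_right hfle (le_of_lt (div_pos hGR hdR))
      rwa [h2] at this
    linarith
  · -- third goal
    have hterm : ∀ g : G, (E₁ * ((U g : Matrix (Fin d) (Fin d) ℂ) * ρ *
        ((U g : Matrix (Fin d) (Fin d) ℂ))ᴴ)).trace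
        = (f:ℂ) * (ρ * ((U g : Matrix (Fin d) (Fin d) ℂ) * ρ *
          ((U g : Matrix (Fin d) (Fin d) ℂ))ᴴ)).trace := fun g => by
      simp only [E₁, Matrix.smul_mul, Matrix.trace_smul, smul_eq_mul]
    have hfull : ∑ g : G, (ρ * ((U g : Matrix (Fin d) (Fin d) ℂ) * ρ *
        ((U g : Matrix (Fin d) (Fin d) ℂ))ᴴ)).trace = z := by
      rw [← Matrix.trace_sum, ← Finset.mul_sum, ← hSdef, hz, Matrix.mul_smul,
        Matrix.mul_one, Matrix.trace_smul, smul_eq_mul, htrρ, mul_one]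
    have hone : (ρ * ((U (1:G) : Matrix (Fin d) (Fin d) ℂ) * ρ *
        ((U (1:G) : Matrix (Fin d) (Fin d) ℂ))ᴴ)).trace = 1 := by
      have hU1 : (U (1:G) : Matrix (Fin d) (Fin d) ℂ) = 1 := by rw [_root_.map_one]; rfl
      rw [hU1, Matrix.one_mul, Matrix.conjTranspose_one, Matrix.mul_one, hρ2, htrρ]
    have hcompl : ∑ g ∈ ({1}ᶜ : Finset G), (ρ * ((U g : Matrix (Fin d) (Fin d) ℂ) * ρ *
        ((U g : Matrix (Fin d) (Fin d) ℂ))ᴴ)).trace = z - 1 := by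
      have := Finset.sum_compl_add_sum ({1} : Finset G)
        (fun g => (ρ * ((U g : Matrix (Fin d) (Fin d) ℂ) * ρ *
          ((U g : Matrix (Fin d) (Fin d) ℂ))ᴴ)).trace)
      rw [Finset.sum_singleton, hone, hfull] at this
      exact eq_sub_of_add_eq this
    have hsum' : ∑ g ∈ ({1}ᶜ : Finset G), (E₁ * ((U g : Matrix (Fin d) (Fin d) ℂ) * ρ *
        ((U g : Matrix (Fin d) (Fin d) ℂ))ᴴ)).trace
        = ((f * ((Fintype.card G : ℝ)/(d:ℝ) - 1) : ℝ) : ℂ) := by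
      simp only [hterm]
      rw [← Finset.mul_sum, hcompl, hzval]
      push_cast
      ring
    rw [hsum', Complex.ofReal_re]
    exact hfm
  · -- fourth goal
    have : (E₁ * ρ).trace = (f : ℂ) := by
      simp only [E₁, Matrix.smul_mul, Matrix.trace_smul, smul_eq_mul, hρ2, htrρ, mul_one]
    rw [this, Complex.ofReal_re]
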